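/- Let p ∈ ℕ, Σ̂ a p×p real symmetric positive semidefinite matrix, β_0 ∈ ℝ^p, λ ≥ λ′ > 0 and ρ ≥ 0. Define β_λ := (Σ̂ + λ·I_p)^{-1} Σ̂ β_0 and β_{λ′} := (Σ̂ + λ′·I_p)^{-1} Σ̂ β_0, and write Σ̂_λ := Σ̂ + λ·I_p. Then ⟨Σ̂_λ exp(−ρ·Σ̂_λ/2) β_λ, β_{λ′} − β_λ⟩ ≥ 0; that is, the compatibility condition needed in the conjugate-gradient loss bound is satisfied for the target vector γ = β_{λ′}. -/

import Mathlib

open Matrix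

/-- Euclidean inner product on `Fin p → ℝ`. -/
noncomputable def ip {p : ℕ} (v w : Fin p → ℝ) : ℝ := ∑ i, v i * w i

section Aux

variable {p : ℕ} {V : Matrix (Fin p) (Fin p) ℝ}

private lemma cfg_mul (h : star V * V = 1) (f g : Fin p → ℝ) :
    (V * diagonal f * star V) * (V * diagonal g * star V)
      = V * diagonal (fun i => f i * g i) * star V := by
  have key : star V * (V * (diagonal g * star V)) = diagonal g * star V := by
    rw [← mul_assoc, h, one_mul]
  simp only [mul_assoc, key, ← diagonal_mul_diagonal]

private lemma cfg_smul (c : ℝ) (f : Fin p → ℝ) :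
    c • (V * diagonal f * star V) = V * diagonal (fun i => c * f i) * star V := by
  have : (fun i => c * f i) = c • f := by funext i; simp
  rw [this, diagonal_smul, mul_smul_comm, smul_mul_assoc]

private lemma cfg_add_smul_one (h2 : V * star V = 1) (c : ℝ) (f : Fin p → ℝ) :
    V * diagonal f * star V + c • (1 : Matrix (Fin p) (Fin p) ℝ)
      = V * diagonal (fun i => f i + c) * star V := by
  have h1 : c • (1 : Matrix (Fin p) (Fin p) ℝ) = V * diagonal (fun _ => c) * star V := by
    rw [smul_one_eq_diagonal]
    have : diagonal (fun _ : Fin p => (c : ℝ)) = c • (1 : Matrix (Fin p) (Fin p) ℝ) := by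
      rw [smul_one_eq_diagonal]
    rw [this, mul_smul_comm, smul_mul_assoc, mul_one, h2, smul_one_eq_diagonal]
  rw [h1, ← add_mul, ← mul_add, diagonal_add]

private lemma cfg_inv (h1 : star V * V = 1) (h2 : V * star V = 1) {f : Fin p → ℝ}
    (hf : ∀ i, f i ≠ 0) :
    (V * diagonal f * star V)⁻¹ = V * diagonal (fun i => (f i)⁻¹) * star V := by
  apply inv_eq_right_inv
  rw [cfg_mul h1]
  have : (fun i => f i * (f i)⁻¹) = fun _ : Fin p => (1 : ℝ) :=
    funext fun i => mul_inv_cancel₀ (hf i)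
  rw [this]
  have : diagonal (fun _ : Fin p => (1 : ℝ)) = (1 : Matrix (Fin p) (Fin p) ℝ) := by
    rw [← diagonal_one]
  rw [this, mul_one, h2]

private lemma star_eq_transpose (M : Matrix (Fin p) (Fin p) ℝ) : star M = Mᵀ := by
  ext i j
  simp [Matrix.star_apply]

private lemma cfg_transpose (f : Fin p → ℝ) :
    (V * diagonal f * star V)ᵀ = V * diagonal f * star V := by
  rw [star_eq_transpose, transpose_mul, transpose_mul, transpose_transpose,
    diagonal_transpose, mul_assoc]

private lemma cfg_exp (h1 : star V * V = 1) (h2 : V * star V = 1) (f : Fin p → ℝ) :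
    NormedSpace.exp (V * diagonal f * star V)
      = V * diagonal (fun i => Real.exp (f i)) * star V := by
  have hVinv : V⁻¹ = star V := inv_eq_left_inv h1
  have hU : IsUnit V := ⟨⟨V, star V, h2, h1⟩, rfl⟩
  have hpi : NormedSpace.exp f = fun i => Real.exp (f i) := by
    funext i
    have := NormedSpace.map_exp (Pi.evalAlgHom ℝ (fun _ : Fin p => ℝ) i)
      (continuous_apply i) f
    simp only [Pi.evalAlgHom_apply] at this
    rw [this, ← Real.exp_eq_exp_ℝ]
  rw [← hVinv, Matrix.exp_conj V (diagonal f) hU, Matrix.exp_diagonal, hpi, hVinv]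

private lemma symm_mulVec_dot (M : Matrix (Fin p) (Fin p) ℝ) (hM : Mᵀ = M)
    (v w : Fin p → ℝ) : (M *ᵥ v) ⬝ᵥ w = v ⬝ᵥ (M *ᵥ w) := by
  conv_rhs => rw [dotProduct_mulVec, ← hM, vecMul_transpose]

end Aux

/-- the compatibility condition needed in the conjugate-gradient loss bound is
satisfied for the target vector `γ = β_{λ′}` whenever `0 < λ′ ≤ λ`. -/
theorem cg_condition_for_ridge_target
    (p : ℕ) (Sig : Matrix (Fin p) (Fin p) ℝ) (hSig : Sig.PosSemidef)
    (beta0 : Fin p → ℝ) (lam lam' : ℝ) (hlam' : 0 < lam') (hll : lam' ≤ lam)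
    (rho : ℝ) (hrho : 0 ≤ rho)
    (Sigl : Matrix (Fin p) (Fin p) ℝ) (hSigl_def : Sigl = Sig + lam • 1)
    (betal betal' : Fin p → ℝ)
    (hbetal : betal = Sigl⁻¹ *ᵥ (Sig *ᵥ beta0))
    (hbetal' : betal' = (Sig + lam' • 1)⁻¹ *ᵥ (Sig *ᵥ beta0)) :
    0 ≤ ip (Sigl *ᵥ (NormedSpace.exp (-((rho / 2) • Sigl)) *ᵥ betal)) (betal' - betal) := by
  classical
  set V : Matrix (Fin p) (Fin p) ℝ := (hSig.1.eigenvectorUnitary : Matrix (Fin p) (Fin p) ℝ)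
    with hV_def
  have h2 : V * star V = 1 :=
    (Matrix.mem_unitaryGroup_iff).mp (Matrix.IsHermitian.eigenvectorUnitary hSig.1).2
  have h1 : star V * V = 1 :=
    (Matrix.mem_unitaryGroup_iff').mp (Matrix.IsHermitian.eigenvectorUnitary hSig.1).2
  set d : Fin p → ℝ := hSig.1.eigenvalues with hd_def
  have hd : ∀ i, 0 ≤ d i := fun i => hSig.eigenvalues_nonneg i
  have hspec : Sig = V * diagonal d * star V := by
    have := hSig.1.spectral_theorem
    simpa using this
  have hlam : 0 < lam := lt_of_lt_of_le hlam' hll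
  have ha_pos : ∀ i, 0 < d i + lam := fun i => by have := hd i; linarith
  have ha'_pos : ∀ i, 0 < d i + lam' := fun i => by have := hd i; linarith
  have hSl : Sigl = V * diagonal (fun i => d i + lam) * star V := by
    rw [hSigl_def, hspec, cfg_add_smul_one h2]
  have hSl_inv : Sigl⁻¹ = V * diagonal (fun i => (d i + lam)⁻¹) * star V := by
    rw [hSl, cfg_inv h1 h2 (fun i => (ha_pos i).ne')]
  have hS'_inv : (Sig + lam' • 1)⁻¹ = V * diagonal (fun i => (d i + lam')⁻¹) * star V := by
    rw [hspec, cfg_add_smul_one h2, cfg_inv h1 h2 (fun i => (ha'_pos i).ne')]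
  have hexp : NormedSpace.exp (-((rho / 2) • Sigl))
      = V * diagonal (fun i => Real.exp (-(rho / 2) * (d i + lam))) * star V := by
    rw [hSl, ← neg_smul, cfg_smul, cfg_exp h1 h2]
  have hbl : betal = (V * diagonal (fun i => (d i + lam)⁻¹ * d i) * star V) *ᵥ beta0 := by
    rw [hbetal]
    conv_lhs => rw [hSl_inv, hspec]
    rw [mulVec_mulVec, cfg_mul h1]
  have hbl' : betal' = (V * diagonal (fun i => (d i + lam')⁻¹ * d i) * star V) *ᵥ beta0 := by
    rw [hbetal']
    conv_lhs => rw [hS'_inv, hspec]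
    rw [mulVec_mulVec, cfg_mul h1]
  set F : Fin p → ℝ :=
    fun i => (d i + lam) * Real.exp (-(rho / 2) * (d i + lam)) * ((d i + lam)⁻¹ * d i)
    with hF_def
  set G : Fin p → ℝ := fun i => (d i + lam')⁻¹ * d i - (d i + lam)⁻¹ * d i with hG_def
  have hx : Sigl *ᵥ (NormedSpace.exp (-((rho / 2) • Sigl)) *ᵥ betal)
      = (V * diagonal F * star V) *ᵥ beta0 := by
    rw [hbl, hexp]
    conv_lhs => rw [hSl]
    rw [mulVec_mulVec, mulVec_mulVec, cfg_mul h1, cfg_mul h1, hF_def]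
  have hy : betal' - betal = (V * diagonal G * star V) *ᵥ beta0 := by
    rw [hbl, hbl', ← sub_mulVec, hG_def, ← sub_mul, ← mul_sub, diagonal_sub]
  have hFG : ∀ i, 0 ≤ F i * G i := by
    intro i
    have hF_nonneg : 0 ≤ F i := by
      rw [hF_def]
      have h₁ := (ha_pos i).le
      have h₂ := hd i
      positivity
    have hG_nonneg : 0 ≤ G i := by
      rw [hG_def]
      simp only
      rw [sub_nonneg]
      apply mul_le_mul_of_nonneg_right _ (hd i)
      apply inv_anti₀ (ha'_pos i)
      linarith
    exact mul_nonneg hF_nonneg hG_nonneg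
  have hPSD : (V * diagonal (fun i => F i * G i) * star V).PosSemidef := by
    have hdiag : (diagonal (fun i => F i * G i)).PosSemidef :=
      posSemidef_diagonal_iff.mpr hFG
    have := hdiag.mul_mul_conjTranspose_same V
    simpa [Matrix.star_eq_conjTranspose] using this
  have key : ip (Sigl *ᵥ (NormedSpace.exp (-((rho / 2) • Sigl)) *ᵥ betal)) (betal' - betal)
      = beta0 ⬝ᵥ ((V * diagonal (fun i => F i * G i) * star V) *ᵥ beta0) := by
    show (Sigl *ᵥ (NormedSpace.exp (-((rho / 2) • Sigl)) *ᵥ betal)) ⬝ᵥ (betal' - betal) = _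
    rw [hx, hy, symm_mulVec_dot _ (cfg_transpose F), mulVec_mulVec, cfg_mul h1]
  rw [key]
  have := hPSD.re_dotProduct_nonneg beta0
  simpa using this
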